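/- Fix real constants κ₁ < 0, κ₂ > 0, κ₃ > 0 and a > 0, and define ρ(r_cpu, r_mem) = a·(g(r_cpu) + m(r_mem)) for r_cpu > 0, r_mem > 0. Then ρ is a convex function on the open positive quadrant, and ρ is strictly decreasing in each of its two arguments (with the other held fixed). -/

import Mathlib

open Real Set

private lemma exp_gt_one {κ₂ x : ℝ} (hκ₂ : 0 < κ₂) (hx : 0 < x) :
    1 < Real.exp (κ₂ * x) := by
  have h : (0:ℝ) < κ₂ * x := mul_pos hκ₂ hx
  calc (1:ℝ) = Real.exp 0 := Real.exp_zero.symm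
    _ < Real.exp (κ₂ * x) := Real.exp_lt_exp.mpr h

private lemma hasDerivAt_g (κ₁ : ℝ) {κ₂ x : ℝ} (hκ₂ : 0 < κ₂) (hx : 0 < x) :
    HasDerivAt (fun r => κ₁ / (1 - Real.exp (κ₂ * r)))
      (κ₁ * κ₂ * Real.exp (κ₂ * x) / (1 - Real.exp (κ₂ * x)) ^ 2) x := by
  have h1 := exp_gt_one hκ₂ hx
  have hu : 1 - Real.exp (κ₂ * x) ≠ 0 := by linarith
  have hE : HasDerivAt (fun r => Real.exp (κ₂ * r)) (Real.exp (κ₂ * x) * κ₂) x := by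
    simpa using (HasDerivAt.exp ((hasDerivAt_id x).const_mul κ₂))
  have h2 : HasDerivAt (fun r => 1 - Real.exp (κ₂ * r)) (-(Real.exp (κ₂ * x) * κ₂)) x :=
    hE.const_sub 1
  have h3 := (h2.inv hu).const_mul κ₁
  have : (fun r => κ₁ / (1 - Real.exp (κ₂ * r))) =
      (fun r => κ₁ * (1 - Real.exp (κ₂ * r))⁻¹) := by
    funext r; rw [div_eq_mul_inv]
  rw [this]
  refine h3.congr_deriv ?_
  field_simp

private lemma hasDerivAt_g' (κ₁ : ℝ) {κ₂ x : ℝ} (hκ₂ : 0 < κ₂) (hx : 0 < x) :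
    HasDerivAt (fun r => κ₁ * κ₂ * Real.exp (κ₂ * r) / (1 - Real.exp (κ₂ * r)) ^ 2)
      (κ₁ * κ₂ ^ 2 * Real.exp (κ₂ * x) * (1 + Real.exp (κ₂ * x))
        / (1 - Real.exp (κ₂ * x)) ^ 3) x := by
  have h1 := exp_gt_one hκ₂ hx
  have hu : 1 - Real.exp (κ₂ * x) ≠ 0 := by linarith
  have hu2 : (1 - Real.exp (κ₂ * x)) ^ 2 ≠ 0 := pow_ne_zero _ hu
  have hE : HasDerivAt (fun r => Real.exp (κ₂ * r)) (Real.exp (κ₂ * x) * κ₂) x := by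
    simpa using (HasDerivAt.exp ((hasDerivAt_id x).const_mul κ₂))
  have h2 : HasDerivAt (fun r => 1 - Real.exp (κ₂ * r)) (-(Real.exp (κ₂ * x) * κ₂)) x :=
    hE.const_sub 1
  have h3 : HasDerivAt (fun r => (1 - Real.exp (κ₂ * r)) ^ 2)
      ((2 : ℕ) * (1 - Real.exp (κ₂ * x)) ^ 1 * (-(Real.exp (κ₂ * x) * κ₂))) x := h2.pow 2
  have h4 := h3.inv hu2
  have h5 := (hE.const_mul (κ₁ * κ₂)).mul h4
  have : (fun r => κ₁ * κ₂ * Real.exp (κ₂ * r) / (1 - Real.exp (κ₂ * r)) ^ 2) =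
      (fun r => (κ₁ * κ₂ * Real.exp (κ₂ * r)) * ((1 - Real.exp (κ₂ * r)) ^ 2)⁻¹) := by
    funext r; rw [div_eq_mul_inv]
  rw [this]
  refine h5.congr_deriv ?_
  simp only [Pi.inv_apply]
  field_simp
  ring

private lemma hasDerivAt_m {κ₃ x : ℝ} (hx : 0 < x) :
    HasDerivAt (fun r => Real.exp (κ₃ / r)) (Real.exp (κ₃ / x) * (-κ₃ / x ^ 2)) x := by
  have hx' : x ≠ 0 := hx.ne'
  have h1 : HasDerivAt (fun r : ℝ => κ₃ / r) (κ₃ * (-(x ^ 2)⁻¹)) x := by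
    have := (hasDerivAt_inv hx').const_mul κ₃
    simpa [div_eq_mul_inv] using this
  have := h1.exp
  convert this using 1
  field_simp

private lemma hasDerivAt_m' {κ₃ x : ℝ} (hx : 0 < x) :
    HasDerivAt (fun r => Real.exp (κ₃ / r) * (-κ₃ / r ^ 2))
      (Real.exp (κ₃ / x) * (κ₃ ^ 2 / x ^ 4 + 2 * κ₃ / x ^ 3)) x := by
  have hx' : x ≠ 0 := hx.ne'
  have hq : HasDerivAt (fun r : ℝ => -κ₃ / r ^ 2) (2 * κ₃ / x ^ 3) x := by
    have h0 : HasDerivAt (fun r : ℝ => r ^ 2) ((2:ℕ) * x ^ 1 * 1) x := (hasDerivAt_id x).pow 2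
    have h1 := (h0.inv (pow_ne_zero 2 hx')).const_mul (-κ₃)
    have : (fun r : ℝ => -κ₃ / r ^ 2) = (fun r : ℝ => -κ₃ * (r ^ 2)⁻¹) := by
      funext r; rw [div_eq_mul_inv]
    rw [this]
    refine h1.congr_deriv ?_
    field_simp
    ring
  have h2 := (hasDerivAt_m hx (κ₃ := κ₃)).mul hq
  refine h2.congr_deriv ?_
  field_simp

private lemma g_convexOn {κ₁ κ₂ : ℝ} (hκ₁ : κ₁ < 0) (hκ₂ : 0 < κ₂) :
    ConvexOn ℝ (Set.Ioi (0 : ℝ)) (fun r => κ₁ / (1 - Real.exp (κ₂ * r))) := by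
  apply convexOn_of_hasDerivWithinAt2_nonneg (convex_Ioi 0)
    (f' := fun r => κ₁ * κ₂ * Real.exp (κ₂ * r) / (1 - Real.exp (κ₂ * r)) ^ 2)
    (f'' := fun r => κ₁ * κ₂ ^ 2 * Real.exp (κ₂ * r) * (1 + Real.exp (κ₂ * r))
        / (1 - Real.exp (κ₂ * r)) ^ 3)
  · exact fun x hx => (hasDerivAt_g κ₁ hκ₂ hx).continuousAt.continuousWithinAt
  · intro x hx
    rw [interior_Ioi] at hx ⊢
    exact (hasDerivAt_g κ₁ hκ₂ hx).hasDerivWithinAt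
  · intro x hx
    rw [interior_Ioi] at hx ⊢
    exact (hasDerivAt_g' κ₁ hκ₂ hx).hasDerivWithinAt
  · intro x hx
    rw [interior_Ioi] at hx
    have h1 := exp_gt_one hκ₂ hx
    have hE := Real.exp_pos (κ₂ * x)
    have hu3 : (1 - Real.exp (κ₂ * x)) ^ 3 < 0 := by
      apply Odd.pow_neg ⟨1, by norm_num⟩; linarith
    have hnum : κ₁ * κ₂ ^ 2 * Real.exp (κ₂ * x) * (1 + Real.exp (κ₂ * x)) < 0 := by
      have : 0 < κ₂ ^ 2 * Real.exp (κ₂ * x) * (1 + Real.exp (κ₂ * x)) := by positivity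
      nlinarith
    have := div_nonneg (by linarith : 0 ≤ -(κ₁ * κ₂ ^ 2 * Real.exp (κ₂ * x) * (1 + Real.exp (κ₂ * x))))
      (by linarith : 0 ≤ -((1 - Real.exp (κ₂ * x)) ^ 3))
    rwa [neg_div_neg_eq] at this

private lemma m_convexOn {κ₃ : ℝ} (hκ₃ : 0 < κ₃) :
    ConvexOn ℝ (Set.Ioi (0 : ℝ)) (fun r => Real.exp (κ₃ / r)) := by
  apply convexOn_of_hasDerivWithinAt2_nonneg (convex_Ioi 0)
    (f' := fun r => Real.exp (κ₃ / r) * (-κ₃ / r ^ 2))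
    (f'' := fun r => Real.exp (κ₃ / r) * (κ₃ ^ 2 / r ^ 4 + 2 * κ₃ / r ^ 3))
  · exact fun x hx => (hasDerivAt_m (Set.mem_Ioi.mp hx)).continuousAt.continuousWithinAt
  · intro x hx
    rw [interior_Ioi] at hx ⊢
    exact (hasDerivAt_m hx).hasDerivWithinAt
  · intro x hx
    rw [interior_Ioi] at hx ⊢
    exact (hasDerivAt_m' hx).hasDerivWithinAt
  · intro x hx
    rw [interior_Ioi] at hx
    have : (0:ℝ) < x := hx
    positivity

private lemma g_strictAntiOn {κ₁ κ₂ : ℝ} (hκ₁ : κ₁ < 0) (hκ₂ : 0 < κ₂) :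
    StrictAntiOn (fun r => κ₁ / (1 - Real.exp (κ₂ * r))) (Set.Ioi (0 : ℝ)) := by
  apply strictAntiOn_of_deriv_neg (convex_Ioi 0)
  · exact fun x hx => (hasDerivAt_g κ₁ hκ₂ hx).continuousAt.continuousWithinAt
  · intro x hx
    rw [interior_Ioi] at hx
    rw [(hasDerivAt_g κ₁ hκ₂ hx).deriv]
    have h1 := exp_gt_one hκ₂ hx
    have hE := Real.exp_pos (κ₂ * x)
    apply div_neg_of_neg_of_pos
    · have := mul_neg_of_neg_of_pos hκ₁ (mul_pos hκ₂ hE)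
      nlinarith
    · have hu : 1 - Real.exp (κ₂ * x) ≠ 0 := by linarith
      exact pow_two_pos_of_ne_zero hu

private lemma m_strictAntiOn {κ₃ : ℝ} (hκ₃ : 0 < κ₃) :
    StrictAntiOn (fun r => Real.exp (κ₃ / r)) (Set.Ioi (0 : ℝ)) := by
  apply strictAntiOn_of_deriv_neg (convex_Ioi 0)
  · exact fun x hx => (hasDerivAt_m (Set.mem_Ioi.mp hx)).continuousAt.continuousWithinAt
  · intro x hx
    rw [interior_Ioi] at hx
    rw [(hasDerivAt_m hx).deriv]
    have : (0:ℝ) < x := hx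
    apply mul_neg_of_pos_of_neg (Real.exp_pos _)
    apply div_neg_of_neg_of_pos (by linarith) (by positivity)

/-- The utilization `ρ(r_cpu, r_mem) = a·(g(r_cpu) + m(r_mem))`, with
`g(r) = κ₁/(1 − exp(κ₂·r))`, `m(r) = exp(κ₃/r)` and `a > 0`, is convex on the
open positive quadrant and strictly decreasing in each of its two arguments
(the other held fixed). -/
theorem utilization_convex_and_decreasing
    (κ₁ κ₂ κ₃ a : ℝ) (hκ₁ : κ₁ < 0) (hκ₂ : 0 < κ₂) (hκ₃ : 0 < κ₃) (ha : 0 < a) :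
    ConvexOn ℝ (Set.Ioi (0 : ℝ) ×ˢ Set.Ioi (0 : ℝ))
      (fun p : ℝ × ℝ =>
        a * (κ₁ / (1 - Real.exp (κ₂ * p.1)) + Real.exp (κ₃ / p.2))) ∧
    (∀ rmem : ℝ, 0 < rmem →
      StrictAntiOn
        (fun rcpu : ℝ =>
          a * (κ₁ / (1 - Real.exp (κ₂ * rcpu)) + Real.exp (κ₃ / rmem)))
        (Set.Ioi (0 : ℝ))) ∧
    (∀ rcpu : ℝ, 0 < rcpu →
      StrictAntiOn
        (fun rmem : ℝ =>
          a * (κ₁ / (1 - Real.exp (κ₂ * rcpu)) + Real.exp (κ₃ / rmem)))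
        (Set.Ioi (0 : ℝ))) := by
  have hs : Convex ℝ (Set.Ioi (0 : ℝ) ×ˢ Set.Ioi (0 : ℝ)) :=
    (convex_Ioi 0).prod (convex_Ioi 0)
  have gconv := g_convexOn hκ₁ hκ₂
  have mconv := m_convexOn hκ₃
  have ganti := g_strictAntiOn hκ₁ hκ₂
  have manti := m_strictAntiOn hκ₃
  refine ⟨?_, ?_, ?_⟩
  · have h1 : ConvexOn ℝ (Set.Ioi (0 : ℝ) ×ˢ Set.Ioi (0 : ℝ))
        (fun p : ℝ × ℝ => κ₁ / (1 - Real.exp (κ₂ * p.1))) := by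
      refine ⟨hs, fun p hp q hq α β hα hβ hab => ?_⟩
      simpa using gconv.2 hp.1 hq.1 hα hβ hab
    have h2 : ConvexOn ℝ (Set.Ioi (0 : ℝ) ×ˢ Set.Ioi (0 : ℝ))
        (fun p : ℝ × ℝ => Real.exp (κ₃ / p.2)) := by
      refine ⟨hs, fun p hp q hq α β hα hβ hab => ?_⟩
      simpa using mconv.2 hp.2 hq.2 hα hβ hab
    have := (h1.add h2).smul ha.le
    simpa [smul_eq_mul] using this
  · intro rmem _ x hx y hy hxy
    have := ganti hx hy hxy
    simp only
    have h := mul_lt_mul_of_pos_left (add_lt_add_left this (Real.exp (κ₃ / rmem))) ha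
    exact h
  · intro rcpu _ x hx y hy hxy
    have := manti hx hy hxy
    simp only
    have h := mul_lt_mul_of_pos_left (add_lt_add_right this (κ₁ / (1 - Real.exp (κ₂ * rcpu)))) ha
    exact h
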